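/- Let $(A, \mathfrak{m}, k)$ be a noetherian local ring and $(F^\bullet, d^\bullet)$ a cochain complex of free $A$-modules of finite rank. If both $\ker d^{p-1}$ and $\operatorname{im} d^{p-1}$ are direct summands of $F^{p-1}$ and $F^p$ respectively, then the base change map $\varphi^{p-1} \colon H^{p-1}(F^\bullet) \otimes_A k \to H^{p-1}(F^\bullet \otimes_A k)$ is surjective. Conversely, if $\varphi^p$ is surjective and $H^p(F^\bullet)$ is free, then $\ker d^{p-1}$ and $\operatorname{im} d^{p-1}$ are direct summands of $F^{p-1}$ and $F^p$ respectively. -/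

import Mathlib

open TensorProduct IsLocalRing

open TensorProduct

section Defs

variable (A : Type*) [CommRing A] (k : Type*) [CommRing k] [Algebra A k]
variable {M0 M1 M2 : Type*} [AddCommGroup M0] [AddCommGroup M1] [AddCommGroup M2]
  [Module A M0] [Module A M1] [Module A M2]

/-- Cohomology of `M0 → M1 → M2` at the middle spot. -/
abbrev coh (d0 : M0 →ₗ[A] M1) (d1 : M1 →ₗ[A] M2) : Type _ :=
  LinearMap.ker d1 ⧸ (LinearMap.range d0).comap (LinearMap.ker d1).subtype

variable (d0 : M0 →ₗ[A] M1) (d1 : M1 →ₗ[A] M2)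

/-- The map on kernels induced by `x ↦ 1 ⊗ x`. -/
noncomputable def kerBaseChange : LinearMap.ker d1 →ₗ[A] LinearMap.ker (d1.baseChange k) :=
  LinearMap.codRestrict ((LinearMap.ker (d1.baseChange k)).restrictScalars A)
    (((TensorProduct.mk A k M1) 1).comp (LinearMap.ker d1).subtype)
    (fun x => by
      simp [LinearMap.mem_ker, (LinearMap.mem_ker.mp x.2)])

/-- The natural base change map `k ⊗ H(F) → H(F ⊗ k)` on cohomology. -/
noncomputable def cohBaseChange :
    k ⊗[A] coh A d0 d1 →ₗ[k] coh k (d0.baseChange k) (d1.baseChange k) :=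
  LinearMap.liftBaseChange k <|
    Submodule.liftQ _
      (((Submodule.mkQ _).restrictScalars A).comp (kerBaseChange A k d1))
      (by
        rintro ⟨x, hx⟩ ⟨y, rfl⟩
        have : kerBaseChange A k d1 ⟨d0 y, hx⟩ ∈
            (LinearMap.range (d0.baseChange k)).comap
              (LinearMap.ker (d1.baseChange k)).subtype := by
          refine ⟨1 ⊗ₜ y, ?_⟩
          rfl
        simpa [LinearMap.mem_ker, Submodule.Quotient.mk_eq_zero] using this)

end Defs

section Aux

variable {A : Type*} [CommRing A] {k : Type*} [CommRing k] [Algebra A k]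

section Gen

variable {M N : Type*} [AddCommGroup M] [AddCommGroup N] [Module A M] [Module A N]

/-- If the quotient by a submodule is projective, the submodule is a direct summand. -/
theorem exists_isCompl_of_projective_quot (p : Submodule A M)
    (hp : Module.Projective A (M ⧸ p)) : ∃ q : Submodule A M, IsCompl p q := by
  obtain ⟨s, hs⟩ := Module.projective_lifting_property p.mkQ LinearMap.id
    (Submodule.mkQ_surjective p)
  refine ⟨LinearMap.ker ((LinearMap.id - s ∘ₗ p.mkQ).codRestrict p fun x => ?_),
    LinearMap.isCompl_of_proj fun x => ?_⟩
  · ext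
    simp only [LinearMap.codRestrict_apply, LinearMap.sub_apply, LinearMap.id_apply,
      LinearMap.comp_apply, Submodule.mkQ_apply]
    rw [(Submodule.Quotient.mk_eq_zero p).mpr x.2, map_zero, sub_zero]
  · rw [← Submodule.Quotient.mk_eq_zero, ← Submodule.mkQ_apply]
    simp only [LinearMap.sub_apply, LinearMap.id_apply, LinearMap.comp_apply, map_sub]
    rw [← LinearMap.comp_apply p.mkQ s, hs]
    simp

theorem baseChange_surjective (f : M →ₗ[A] N) (hf : Function.Surjective f) :
    Function.Surjective (f.baseChange k) := by
  intro u
  induction u using TensorProduct.induction_on with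
  | zero => exact ⟨0, map_zero _⟩
  | tmul c n => obtain ⟨m, rfl⟩ := hf n; exact ⟨c ⊗ₜ m, rfl⟩
  | add x y hx hy =>
      obtain ⟨a, rfl⟩ := hx; obtain ⟨b, rfl⟩ := hy; exact ⟨a + b, map_add _ _ _⟩

theorem comp_ker_subtype' (f : M →ₗ[A] N) :
    f ∘ₗ (LinearMap.ker f).subtype = 0 := by
  ext x; exact x.2

/-- The `k`-linear base change map on kernels `k ⊗ ker d₁ → ker (d₁ ⊗ k)`. -/
noncomputable def kerBC (d1 : M →ₗ[A] N) :
    k ⊗[A] (LinearMap.ker d1) →ₗ[k] LinearMap.ker (d1.baseChange k) :=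
  LinearMap.codRestrict (LinearMap.ker (d1.baseChange k))
    ((LinearMap.ker d1).subtype.baseChange k) fun a => by
      rw [LinearMap.mem_ker, ← LinearMap.comp_apply, ← LinearMap.baseChange_comp,
        comp_ker_subtype' d1, LinearMap.baseChange_zero]
      simp

@[simp] theorem kerBC_coe (d1 : M →ₗ[A] N) (a : k ⊗[A] (LinearMap.ker d1)) :
    (kerBC d1 a : k ⊗[A] M) = (LinearMap.ker d1).subtype.baseChange k a := rfl

end Gen

section Three

variable {M0 M1 M2 : Type*} [AddCommGroup M0] [AddCommGroup M1] [AddCommGroup M2]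
  [Module A M0] [Module A M1] [Module A M2]
variable (d0 : M0 →ₗ[A] M1) (d1 : M1 →ₗ[A] M2)

theorem cohBaseChange_mkQ (a : k ⊗[A] LinearMap.ker d1) :
    cohBaseChange A k d0 d1
        ((Submodule.mkQ ((LinearMap.range d0).comap (LinearMap.ker d1).subtype)).baseChange k a)
      = Submodule.Quotient.mk (kerBC d1 a) := by
  induction a using TensorProduct.induction_on with
  | zero => simp
  | tmul c x =>
      have h1 : (Submodule.mkQ ((LinearMap.range d0).comap (LinearMap.ker d1).subtype)).baseChange
          k (c ⊗ₜ x) = c ⊗ₜ (Submodule.Quotient.mk x) := rfl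
      rw [h1]
      show (LinearMap.liftBaseChange k _) (c ⊗ₜ _) = _
      rw [LinearMap.liftBaseChange_tmul, Submodule.liftQ_apply]
      simp only [LinearMap.comp_apply, LinearMap.restrictScalars_apply, Submodule.mkQ_apply]
      rw [← Submodule.Quotient.mk_smul]
      congr 1
      apply Subtype.ext
      show c • ((1 : k) ⊗ₜ[A] (x : M1)) = _
      rw [TensorProduct.smul_tmul', smul_eq_mul, mul_one]
      rfl
  | add x y hx hy => rw [map_add, map_add, map_add, Submodule.Quotient.mk_add, hx, hy]

/-- Surjectivity direction: if `ker d1` and `range d1` are direct summands,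
then the cohomology base change map is surjective. -/
theorem dir1 (hW : ∃ W : Submodule A M1, IsCompl (LinearMap.ker d1) W)
    (hU : ∃ U : Submodule A M2, IsCompl (LinearMap.range d1) U) :
    Function.Surjective (cohBaseChange A k d0 d1) := by
  obtain ⟨W, hW⟩ := hW
  obtain ⟨U, hU⟩ := hU
  -- the restriction of `d1` to `W` is an iso onto `range d1`
  set K := LinearMap.ker d1
  set B := LinearMap.range d1
  have hmem : ∀ w : W, d1 w ∈ B := fun w => LinearMap.mem_range_self _ _
  set m : W →ₗ[A] B := (d1 ∘ₗ W.subtype).codRestrict B (fun w => hmem w) with hm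
  have hminj : Function.Injective m := by
    intro a b hab
    have hval : d1 (a : M1) = d1 (b : M1) := congrArg Subtype.val hab
    have : d1 (a - b : W) = 0 := by
      rw [Submodule.coe_sub, map_sub, hval, sub_self]
    have h2 : ((a - b : W) : M1) ∈ K ⊓ W := ⟨this, (a - b).2⟩
    rw [hW.inf_eq_bot] at h2
    have : ((a - b : W) : M1) = 0 := h2
    exact sub_eq_zero.mp (by exact_mod_cast this)
  have hmsurj : Function.Surjective m := by
    rintro ⟨b, y, rfl⟩
    have hy : y ∈ K ⊔ W := by rw [hW.sup_eq_top]; trivial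
    obtain ⟨u, hu, v, hv, rfl⟩ := Submodule.mem_sup.mp hy
    refine ⟨⟨v, hv⟩, Subtype.ext ?_⟩
    simp only [LinearMap.codRestrict_apply, LinearMap.comp_apply, Submodule.subtype_apply]
    rw [map_add, LinearMap.mem_ker.mp hu, zero_add]
    rfl
  let eW : W ≃ₗ[A] B := LinearEquiv.ofBijective m ⟨hminj, hmsurj⟩
  set r : M2 →ₗ[A] W := (eW.symm : B →ₗ[A] W) ∘ₗ B.linearProjOfIsCompl U hU with hr
  have hretr : r ∘ₗ (d1 ∘ₗ W.subtype) = LinearMap.id := by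
    ext w
    simp only [LinearMap.comp_apply, LinearMap.id_apply, hr, LinearEquiv.coe_coe,
      Submodule.subtype_apply]
    have : B.linearProjOfIsCompl U hU (d1 (w : M1)) = m w := by
      have : (m w : M2) = d1 (w : M1) := rfl
      rw [← this]; exact Submodule.linearProjOfIsCompl_apply_left hU (m w)
    rw [this]
    exact congrArg Subtype.val (eW.symm_apply_apply w)
  -- injectivity of `(d1 ∘ W.subtype) ⊗ k`
  have hinj : Function.Injective ((d1 ∘ₗ W.subtype).baseChange k) := by
    have : (r.baseChange k) ∘ₗ ((d1 ∘ₗ W.subtype).baseChange k) = LinearMap.id := by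
      rw [← LinearMap.baseChange_comp, hretr, LinearMap.baseChange_id]
    exact Function.HasLeftInverse.injective ⟨r.baseChange k, LinearMap.congr_fun this⟩
  -- every element of `ker (d1 ⊗ k)` comes from `k ⊗ K`
  have hker : ∀ v ∈ LinearMap.ker (d1.baseChange k),
      v ∈ LinearMap.range (K.subtype.baseChange k) := by
    intro v hv
    have hid : K.subtype ∘ₗ K.linearProjOfIsCompl W hW
        + W.subtype ∘ₗ W.linearProjOfIsCompl K hW.symm = LinearMap.id := by
      ext x
      exact Submodule.projection_add_projection_eq_self hW x
    set a := (K.linearProjOfIsCompl W hW).baseChange k v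
    set b := (W.linearProjOfIsCompl K hW.symm).baseChange k v
    have hsum : K.subtype.baseChange k a + W.subtype.baseChange k b = v := by
      have := congrArg (fun f => LinearMap.baseChange k f v) hid
      simpa [LinearMap.baseChange_add, LinearMap.baseChange_comp] using this
    have hb : (d1 ∘ₗ W.subtype).baseChange k b = 0 := by
      have h0 : d1.baseChange k v = 0 := hv
      have hKa : d1.baseChange k (K.subtype.baseChange k a) = 0 := by
        rw [← LinearMap.comp_apply, ← LinearMap.baseChange_comp, comp_ker_subtype' d1,
          LinearMap.baseChange_zero]
        simp
      calc (d1 ∘ₗ W.subtype).baseChange k b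
          = d1.baseChange k (W.subtype.baseChange k b) := by
            rw [LinearMap.baseChange_comp]; rfl
        _ = d1.baseChange k (K.subtype.baseChange k a) +
              d1.baseChange k (W.subtype.baseChange k b) := by rw [hKa, zero_add]
        _ = d1.baseChange k v := by rw [← map_add, hsum]
        _ = 0 := h0
    have hb0 : b = 0 := hinj (by rw [hb, map_zero])
    rw [hb0, map_zero, add_zero] at hsum
    exact ⟨a, hsum⟩
  -- conclude surjectivity
  intro q
  obtain ⟨z, rfl⟩ := Submodule.Quotient.mk_surjective _ q
  obtain ⟨a, ha⟩ := hker z z.2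
  refine ⟨(Submodule.mkQ _).baseChange k a, ?_⟩
  rw [cohBaseChange_mkQ]
  congr 1
  exact Subtype.ext ha

end Three

end Aux

theorem stmt19 {A : Type*} [CommRing A] [IsLocalRing A] [IsNoetherianRing A]
    {F0 : Type*} [AddCommGroup F0] [Module A F0] [Module.Free A F0] [Module.Finite A F0]
    {F1 : Type*} [AddCommGroup F1] [Module A F1] [Module.Free A F1] [Module.Finite A F1]
    {F2 : Type*} [AddCommGroup F2] [Module A F2] [Module.Free A F2] [Module.Finite A F2]
    {F3 : Type*} [AddCommGroup F3] [Module A F3] [Module.Free A F3] [Module.Finite A F3]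
    (d0 : F0 →ₗ[A] F1) (d1 : F1 →ₗ[A] F2) (d2 : F2 →ₗ[A] F3)
    (hc01 : d1 ∘ₗ d0 = 0) (hc12 : d2 ∘ₗ d1 = 0) :
    ((∃ W : Submodule A F1, IsCompl (LinearMap.ker d1) W) ∧
      (∃ U : Submodule A F2, IsCompl (LinearMap.range d1) U) →
      Function.Surjective (cohBaseChange A (ResidueField A) d0 d1)) ∧
    (Function.Surjective (cohBaseChange A (ResidueField A) d1 d2) →
      Module.Free A (coh A d1 d2) →
      (∃ W : Submodule A F1, IsCompl (LinearMap.ker d1) W) ∧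
      (∃ U : Submodule A F2, IsCompl (LinearMap.range d1) U)) := by
  constructor
  · rintro ⟨hW, hU⟩
    exact dir1 d0 d1 hW hU
  · intro hsurj hfree
    -- `d1` lands in `Z := ker d2`
    have hd1mem : ∀ y, d1 y ∈ LinearMap.ker d2 := fun y => LinearMap.ext_iff.mp hc12 y
    have hrangele : LinearMap.range (d1.baseChange (ResidueField A)) ≤
        LinearMap.range ((LinearMap.ker d2).subtype.baseChange (ResidueField A)) := by
      rintro _ ⟨t, rfl⟩
      refine ⟨(d1.codRestrict (LinearMap.ker d2) hd1mem).baseChange _ t, ?_⟩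
      rw [← LinearMap.comp_apply, ← LinearMap.baseChange_comp,
        LinearMap.subtype_comp_codRestrict]
    -- key consequence of surjectivity: every cocycle of `F ⊗ k` comes from `k ⊗ Z`
    have hker : ∀ v ∈ LinearMap.ker (d2.baseChange (ResidueField A)),
        v ∈ LinearMap.range ((LinearMap.ker d2).subtype.baseChange (ResidueField A)) := by
      intro v hv
      obtain ⟨w, hw⟩ := hsurj (Submodule.Quotient.mk ⟨v, hv⟩)
      obtain ⟨a, rfl⟩ := baseChange_surjective
        (Submodule.mkQ ((LinearMap.range d1).comap (LinearMap.ker d2).subtype))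
        (Submodule.mkQ_surjective _) w
      rw [cohBaseChange_mkQ d1 d2 a] at hw
      have hdiff := (Submodule.Quotient.eq _).mp hw
      have h1 : ((kerBC d2 a : (ResidueField A) ⊗[A] F2) - v) ∈
          LinearMap.range (d1.baseChange (ResidueField A)) := hdiff
      have h2 : (kerBC d2 a : (ResidueField A) ⊗[A] F2) ∈
          LinearMap.range ((LinearMap.ker d2).subtype.baseChange (ResidueField A)) := ⟨a, rfl⟩
      have h3 := Submodule.sub_mem _ h2 (hrangele h1)
      simpa using h3
    -- the induced injection `F2 ⧸ Z → F3` stays injective after `⊗ k`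
    have hlmk : ((LinearMap.ker d2).liftQ d2 le_rfl) ∘ₗ (LinearMap.ker d2).mkQ = d2 :=
      Submodule.liftQ_mkQ _ d2 le_rfl
    have hlinj : Function.Injective
        (((LinearMap.ker d2).liftQ d2 le_rfl).baseChange (ResidueField A)) := by
      have key : ∀ u, ((LinearMap.ker d2).liftQ d2 le_rfl).baseChange (ResidueField A) u = 0 →
          u = 0 := by
        intro u hu
        obtain ⟨v, rfl⟩ := baseChange_surjective (LinearMap.ker d2).mkQ
          (Submodule.mkQ_surjective _) u
        have hv : v ∈ LinearMap.ker (d2.baseChange (ResidueField A)) := by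
          rw [LinearMap.mem_ker, ← hlmk, LinearMap.baseChange_comp, LinearMap.comp_apply]
          exact hu
        obtain ⟨t, rfl⟩ := hker v hv
        rw [← LinearMap.comp_apply, ← LinearMap.baseChange_comp]
        have hms : (LinearMap.ker d2).mkQ ∘ₗ (LinearMap.ker d2).subtype = 0 := by
          ext x
          exact (Submodule.Quotient.mk_eq_zero _).mpr x.2
        rw [hms, LinearMap.baseChange_zero]
        rfl
      intro x y hxy
      exact sub_eq_zero.mp (key (x - y) (by rw [map_sub, hxy, sub_self]))
    have hlinj' : Function.Injective
        (((LinearMap.ker d2).liftQ d2 le_rfl).lTensor (ResidueField A)) := by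
      rw [← LinearMap.baseChange_eq_ltensor]
      exact hlinj
    obtain ⟨l', hl'⟩ := (IsLocalRing.split_injective_iff_lTensor_residueField_injective
      ((LinearMap.ker d2).liftQ d2 le_rfl)).mpr hlinj'
    have hprojQ : Module.Projective A (F2 ⧸ LinearMap.ker d2) :=
      Module.Projective.of_split _ l' hl'
    obtain ⟨U0, hU0⟩ := exists_isCompl_of_projective_quot (LinearMap.ker d2) hprojQ
    -- the boundaries are a direct summand of the cocycles since the cohomology is free
    obtain ⟨W1, hW1⟩ := exists_isCompl_of_projective_quot
      ((LinearMap.range d1).comap (LinearMap.ker d2).subtype)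
      (by haveI := hfree; infer_instance)
    -- build a projection of `F2` onto `range d1`
    set πZ := (LinearMap.ker d2).linearProjOfIsCompl U0 hU0 with hπZ
    set πB := ((LinearMap.range d1).comap (LinearMap.ker d2).subtype).linearProjOfIsCompl W1 hW1
      with hπB
    have hPmem : ∀ x, (LinearMap.ker d2).subtype
        ((((LinearMap.range d1).comap (LinearMap.ker d2).subtype).subtype) (πB (πZ x))) ∈
        LinearMap.range d1 := fun x => (πB (πZ x)).2
    set f : F2 →ₗ[A] LinearMap.range d1 :=
      ((LinearMap.ker d2).subtype ∘ₗ
        (((LinearMap.range d1).comap (LinearMap.ker d2).subtype).subtype ∘ₗ πB ∘ₗ πZ)).codRestrict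
        _ hPmem with hfdef
    have hf : ∀ x : LinearMap.range d1, f x = x := by
      rintro ⟨x, hx⟩
      apply Subtype.ext
      have hxZ : x ∈ LinearMap.ker d2 := by
        obtain ⟨y, rfl⟩ := hx
        exact hd1mem y
      have hxB : (⟨x, hxZ⟩ : LinearMap.ker d2) ∈
          (LinearMap.range d1).comap (LinearMap.ker d2).subtype := hx
      have h1 : πZ x = ⟨x, hxZ⟩ := Submodule.linearProjOfIsCompl_apply_left hU0 ⟨x, hxZ⟩
      have h2 : πB ⟨x, hxZ⟩ = ⟨⟨x, hxZ⟩, hxB⟩ :=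
        Submodule.linearProjOfIsCompl_apply_left hW1 ⟨⟨x, hxZ⟩, hxB⟩
      show (LinearMap.ker d2).subtype ((((LinearMap.range d1).comap
        (LinearMap.ker d2).subtype).subtype) (πB (πZ x))) = x
      rw [h1, h2]
      rfl
    refine ⟨?_, ⟨_, LinearMap.isCompl_of_proj hf⟩⟩
    -- `ker d1` is a direct summand since `F1 ⧸ ker d1 ≃ range d1` is projective
    have hprojB : Module.Projective A (LinearMap.range d1) :=
      Module.Projective.of_split (LinearMap.range d1).subtype f (by ext x; exact congrArg Subtype.val (hf x))
    have hprojQ1 : Module.Projective A (F1 ⧸ LinearMap.ker d1) :=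
      Module.Projective.of_equiv (d1.quotKerEquivRange).symm
    exact exists_isCompl_of_projective_quot _ hprojQ1
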